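/- Under the hypotheses |f_i(x)| ≤ K, |f_i'(x)| ≤ L, |f_i(x)−f_i(z)−f_i'(z)(x−z)| ≤ S|x−z|² for i = 1,…,M with M ≥ d+1, and φ(x) = {x + Δt f_i(x)}_i, one has for all x₀: co(φ^M(x₀)) ⊆ ⋃_{x∈φ(x₀)} co(φ^(M−1)(x)) + R·B, where R = (8M−10)KLΔt² + (2KL²((M−1)³−(M−1))/3·(1+LΔt)^(M−3) + SK²M(M−1)(2M−1)/3)Δt³. -/

import Mathlib

open scoped Pointwise
open Finset

/-- Image of a set under a set-valued map. -/
def setImage {E : Type*} (φ : E → Set E) (A : Set E) : Set E := ⋃ x ∈ A, φ x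

/-- `m`-fold iterated image of a point under a set-valued map. -/
def iterMap {E : Type*} (φ : E → Set E) : ℕ → E → Set E
  | 0, z => {z}
  | n + 1, z => setImage φ (iterMap φ n z)

namespace CHCE

set_option linter.unusedVariables false



variable {E : Type*} [NormedAddCommGroup E] [NormedSpace ℝ E] {ι : Type*}

/-- Euler trajectory. -/
noncomputable def traj (Δt : ℝ) (f : ι → E → E) (z : E) (σ : ℕ → ι) : ℕ → E
  | 0 => z
  | k + 1 => traj Δt f z σ k + Δt • f (σ k) (traj Δt f z σ k)

lemma traj_congr {Δt : ℝ} {f : ι → E → E} {z : E} {σ σ' : ℕ → ι} {n : ℕ}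
    (h : ∀ k < n, σ k = σ' k) : traj Δt f z σ n = traj Δt f z σ' n := by
  induction n with
  | zero => rfl
  | succ n ih =>
      have h1 : traj Δt f z σ n = traj Δt f z σ' n := ih fun k hk => h k (hk.trans n.lt_succ_self)
      simp only [traj, h1, h n n.lt_succ_self]

lemma traj_mem_iterMap (Δt : ℝ) (f : ι → E → E) (z : E) (σ : ℕ → ι) (n : ℕ) :
    traj Δt f z σ n ∈ iterMap (fun x => ⋃ i, {x + Δt • f i x}) n z := by
  induction n with
  | zero => simp [traj, iterMap]
  | succ n ih =>
      simp only [iterMap, setImage, Set.mem_iUnion]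
      exact ⟨traj Δt f z σ n, ih, σ n, rfl⟩

lemma mem_iterMap_iff [Nonempty ι] {Δt : ℝ} {f : ι → E → E} {z x : E} {n : ℕ} :
    x ∈ iterMap (fun x => ⋃ i, {x + Δt • f i x}) n z ↔ ∃ σ : ℕ → ι, x = traj Δt f z σ n := by
  induction n generalizing x with
  | zero =>
      simp only [iterMap, Set.mem_singleton_iff]
      exact ⟨fun h => ⟨fun _ => Classical.arbitrary ι, h⟩, fun ⟨σ, h⟩ => h⟩
  | succ n ih =>
      simp only [iterMap, setImage, Set.mem_iUnion, Set.mem_singleton_iff]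
      constructor
      · rintro ⟨y, hy, i, rfl⟩
        obtain ⟨σ, rfl⟩ := ih.1 hy
        refine ⟨Function.update σ n i, ?_⟩
        have h1 : traj Δt f z (Function.update σ n i) n = traj Δt f z σ n :=
          traj_congr fun k hk => Function.update_of_ne hk.ne i σ
        simp [traj, h1, Function.update_self]
      · rintro ⟨σ, rfl⟩
        exact ⟨traj Δt f z σ n, ih.2 ⟨σ, rfl⟩, σ n, rfl⟩

lemma traj_shift (Δt : ℝ) (f : ι → E → E) (z : E) (σ : ℕ → ι) (n : ℕ) :
    traj Δt f z σ (n + 1) = traj Δt f (z + Δt • f (σ 0) z) (fun k => σ (k + 1)) n := by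
  induction n with
  | zero => simp [traj]
  | succ n ih =>
      calc traj Δt f z σ (n + 1 + 1)
          = traj Δt f z σ (n + 1) + Δt • f (σ (n + 1)) (traj Δt f z σ (n + 1)) := rfl
        _ = traj Δt f (z + Δt • f (σ 0) z) (fun k => σ (k + 1)) (n + 1) := by rw [ih]; rfl

lemma mem_smul_closedBall_of_norm_le {v : E} {R : ℝ} (hR : 0 ≤ R) (h : ‖v‖ ≤ R) :
    v ∈ R • Metric.closedBall (0 : E) 1 := by
  rcases eq_or_lt_of_le hR with hR0 | hR0
  · have hv : v = 0 := by
      have := h.trans_eq hR0.symm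
      simpa using norm_le_zero_iff.1 (h.trans hR0.symm.le)
    exact ⟨0, by simp, by simp [hv]⟩
  · refine ⟨R⁻¹ • v, ?_, by simp [smul_smul, mul_inv_cancel₀ hR0.ne', one_smul]⟩
    simp only [Metric.mem_closedBall, dist_zero_right, norm_smul, norm_inv, Real.norm_eq_abs,
      abs_of_pos hR0]
    rw [inv_mul_le_iff₀ hR0]
    linarith


variable (Δt K L S : ℝ) {M : ℕ} (f : Fin M → E → E) (x₀ : E)
noncomputable def Gmod (n : ℕ) (σ : ℕ → Fin M) : E := ∑ k ∈ range n, f (σ k) x₀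

noncomputable def Qmod (n : ℕ) (σ : ℕ → Fin M) : E :=
  ∑ k ∈ range n, fderiv ℝ (f (σ k)) x₀ (Gmod f x₀ k σ)

variable {Δt K L S f x₀}

lemma traj_dist (hΔt : 0 ≤ Δt) (hK : ∀ i x, ‖f i x‖ ≤ K) (σ : ℕ → Fin M) (n : ℕ) :
    ‖traj Δt f x₀ σ n - x₀‖ ≤ n * K * Δt := by
  induction n with
  | zero => simp [traj]
  | succ n ih =>
      have h1 : traj Δt f x₀ σ (n+1) - x₀
          = (traj Δt f x₀ σ n - x₀) + Δt • f (σ n) (traj Δt f x₀ σ n) := by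
        simp [traj]; abel
      rw [h1]
      have h2 : ‖Δt • f (σ n) (traj Δt f x₀ σ n)‖ ≤ Δt * K := by
        rw [norm_smul, Real.norm_eq_abs, abs_of_nonneg hΔt]
        exact mul_le_mul_of_nonneg_left (hK _ _) hΔt
      calc ‖(traj Δt f x₀ σ n - x₀) + Δt • f (σ n) (traj Δt f x₀ σ n)‖
          ≤ ‖traj Δt f x₀ σ n - x₀‖ + ‖Δt • f (σ n) (traj Δt f x₀ σ n)‖ := norm_add_le _ _
        _ ≤ n * K * Δt + Δt * K := add_le_add ih h2
        _ = (n+1 : ℕ) * K * Δt := by push_cast; ring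

lemma traj_lin (hΔt : 0 ≤ Δt) (hK : ∀ i x, ‖f i x‖ ≤ K) (hK0 : 0 ≤ K) (hL0 : 0 ≤ L)
    (hLip : ∀ i (x y : E), ‖f i x - f i y‖ ≤ L * ‖x - y‖) (σ : ℕ → Fin M) (n : ℕ) :
    ‖traj Δt f x₀ σ n - (x₀ + Δt • Gmod f x₀ n σ)‖
      ≤ K * L * Δt ^ 2 * (∑ t ∈ range n, (t : ℝ)) := by
  induction n with
  | zero => simp [traj, Gmod]
  | succ n ih =>
      have h1 : traj Δt f x₀ σ (n+1) - (x₀ + Δt • Gmod f x₀ (n+1) σ)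
          = (traj Δt f x₀ σ n - (x₀ + Δt • Gmod f x₀ n σ))
            + Δt • (f (σ n) (traj Δt f x₀ σ n) - f (σ n) x₀) := by
        have hG : Gmod f x₀ (n+1) σ = Gmod f x₀ n σ + f (σ n) x₀ := sum_range_succ _ _
        have hT : traj Δt f x₀ σ (n+1)
            = traj Δt f x₀ σ n + Δt • f (σ n) (traj Δt f x₀ σ n) := rfl
        rw [hT, hG]
        module
      rw [h1, sum_range_succ]
      have h2 : ‖Δt • (f (σ n) (traj Δt f x₀ σ n) - f (σ n) x₀)‖ ≤ Δt * (L * (n * K * Δt)) := by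
        rw [norm_smul, Real.norm_eq_abs, abs_of_nonneg hΔt]
        refine mul_le_mul_of_nonneg_left ?_ hΔt
        exact (hLip _ _ _).trans (mul_le_mul_of_nonneg_left (traj_dist hΔt hK σ n) hL0)
      calc ‖_ + _‖ ≤ ‖traj Δt f x₀ σ n - (x₀ + Δt • Gmod f x₀ n σ)‖
            + ‖Δt • (f (σ n) (traj Δt f x₀ σ n) - f (σ n) x₀)‖ := norm_add_le _ _
        _ ≤ K * L * Δt ^ 2 * (∑ t ∈ range n, (t : ℝ)) + Δt * (L * (n * K * Δt)) :=
            add_le_add ih h2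
        _ = K * L * Δt ^ 2 * ((∑ t ∈ range n, (t : ℝ)) + n) := by ring

lemma traj_quad (hΔt : 0 ≤ Δt) (hK : ∀ i x, ‖f i x‖ ≤ K) (hK0 : 0 ≤ K) (hL0 : 0 ≤ L)
    (hS0 : 0 ≤ S)
    (hLip : ∀ i (x y : E), ‖f i x - f i y‖ ≤ L * ‖x - y‖)
    (hA : ∀ i (v : E), ‖fderiv ℝ (f i) x₀ v‖ ≤ L * ‖v‖)
    (hS : ∀ i (x : E), ‖f i x - f i x₀ - fderiv ℝ (f i) x₀ (x - x₀)‖ ≤ S * ‖x - x₀‖ ^ 2)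
    (σ : ℕ → Fin M) (n : ℕ) :
    ‖traj Δt f x₀ σ n - (x₀ + Δt • Gmod f x₀ n σ + Δt ^ 2 • Qmod f x₀ n σ)‖
      ≤ ∑ t ∈ range n,
          (K * L ^ 2 * Δt ^ 3 * (∑ s ∈ range t, (s : ℝ)) + S * K ^ 2 * Δt ^ 3 * (t : ℝ) ^ 2) := by
  induction n with
  | zero => simp [traj, Gmod, Qmod]
  | succ n ih =>
      set x_n := traj Δt f x₀ σ n with hxn
      set A := fderiv ℝ (f (σ n)) x₀
      have h1 : traj Δt f x₀ σ (n+1) - (x₀ + Δt • Gmod f x₀ (n+1) σ + Δt ^ 2 • Qmod f x₀ (n+1) σ)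
          = (x_n - (x₀ + Δt • Gmod f x₀ n σ + Δt ^ 2 • Qmod f x₀ n σ))
            + Δt • ((f (σ n) x_n - f (σ n) x₀ - A (x_n - x₀))
              + A (x_n - (x₀ + Δt • Gmod f x₀ n σ))) := by
        have hA1 : A (x_n - (x₀ + Δt • Gmod f x₀ n σ))
            = A (x_n - x₀) - Δt • A (Gmod f x₀ n σ) := by
          rw [show x_n - (x₀ + Δt • Gmod f x₀ n σ) = (x_n - x₀) - Δt • Gmod f x₀ n σ by abel,
            map_sub, map_smul]
        have hG : Gmod f x₀ (n+1) σ = Gmod f x₀ n σ + f (σ n) x₀ := sum_range_succ _ _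
        have hQ : Qmod f x₀ (n+1) σ = Qmod f x₀ n σ + A (Gmod f x₀ n σ) := sum_range_succ _ _
        have hT : traj Δt f x₀ σ (n+1) = x_n + Δt • f (σ n) x_n := rfl
        rw [hT, hG, hQ, hA1]
        module
      rw [h1, sum_range_succ]
      have hb1 : ‖f (σ n) x_n - f (σ n) x₀ - A (x_n - x₀)‖ ≤ S * K ^ 2 * Δt ^ 2 * (n:ℝ)^2 := by
        refine (hS _ _).trans ?_
        have := traj_dist (x₀ := x₀) hΔt hK σ n
        calc S * ‖x_n - x₀‖ ^ 2 ≤ S * (n * K * Δt) ^ 2 := by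
              refine mul_le_mul_of_nonneg_left ?_ hS0
              exact pow_le_pow_left₀ (norm_nonneg _) this 2
          _ = S * K ^ 2 * Δt ^ 2 * (n:ℝ)^2 := by ring
      have hb2 : ‖A (x_n - (x₀ + Δt • Gmod f x₀ n σ))‖
          ≤ L * (K * L * Δt ^ 2 * (∑ s ∈ range n, (s : ℝ))) := by
        refine (hA _ _).trans ?_
        exact mul_le_mul_of_nonneg_left (traj_lin hΔt hK hK0 hL0 hLip σ n) hL0
      have h2 : ‖Δt • ((f (σ n) x_n - f (σ n) x₀ - A (x_n - x₀))
            + A (x_n - (x₀ + Δt • Gmod f x₀ n σ)))‖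
          ≤ K * L ^ 2 * Δt ^ 3 * (∑ s ∈ range n, (s : ℝ)) + S * K ^ 2 * Δt ^ 3 * (n:ℝ)^2 := by
        rw [norm_smul, Real.norm_eq_abs, abs_of_nonneg hΔt]
        calc Δt * ‖_ + _‖ ≤ Δt * (S * K ^ 2 * Δt ^ 2 * (n:ℝ)^2
              + L * (K * L * Δt ^ 2 * (∑ s ∈ range n, (s : ℝ)))) := by
              refine mul_le_mul_of_nonneg_left ?_ hΔt
              exact (norm_add_le _ _).trans (add_le_add hb1 hb2)
          _ = K * L ^ 2 * Δt ^ 3 * (∑ s ∈ range n, (s : ℝ)) + S * K ^ 2 * Δt ^ 3 * (n:ℝ)^2 := by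
              ring
      exact (norm_add_le _ _).trans (add_le_add ih h2)

/-- the modified sequence: first entry `i`, occurrences of `i` elsewhere replaced by `a`. -/
def seqB (i : Fin M) (τ : ℕ → Fin M) (a : Fin M) : ℕ → Fin M :=
  fun k => if k = 0 then i else if τ k = i then a else τ k

/-- number of occurrences of `i` at positions `1,…,M-1`. -/
def cnt (i : Fin M) (τ : ℕ → Fin M) : ℕ := #((Ico 1 M).filter fun k => τ k = i)


lemma tri_sum (χ : ℕ → ℝ) (n : ℕ) :
    ∑ k ∈ range n, ((∑ l ∈ range k, χ l) + k * χ k) = ((n : ℝ) - 1) * ∑ k ∈ range n, χ k := by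
  induction n with
  | zero => simp
  | succ n ih =>
      rw [sum_range_succ, ih, sum_range_succ (f := χ)]
      push_cast
      ring

lemma Gmod_seqB (hM : 0 < M) (i a : Fin M) (τ : ℕ → Fin M) :
    Gmod f x₀ M (seqB i τ a)
      = Gmod f x₀ M τ + (f i x₀ - f (τ 0) x₀) + (cnt i τ : ℝ) • (f a x₀ - f i x₀) := by
  have key : ∀ b : Fin M, ∀ ρ : ℕ → Fin M,
      ∑ k ∈ range M, f (ρ k) x₀
        = f (ρ 0) x₀ + ∑ k ∈ Ico 1 M, f (ρ k) x₀ := by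
    intro b ρ
    rw [range_eq_Ico, Finset.sum_eq_sum_Ico_succ_bot hM]
  have h1 : Gmod f x₀ M (seqB i τ a)
      = f i x₀ + ∑ k ∈ Ico 1 M, f (seqB i τ a k) x₀ := by
    rw [Gmod, key i (seqB i τ a)]; rfl
  have h2 : Gmod f x₀ M τ = f (τ 0) x₀ + ∑ k ∈ Ico 1 M, f (τ k) x₀ := key i τ
  have h3 : ∑ k ∈ Ico 1 M, f (seqB i τ a k) x₀
      = ∑ k ∈ Ico 1 M, f (τ k) x₀ + (cnt i τ : ℝ) • (f a x₀ - f i x₀) := by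
    have e1 : ∀ k ∈ Ico 1 M, f (seqB i τ a k) x₀
        = f (τ k) x₀ + (if τ k = i then f a x₀ - f i x₀ else 0) := by
      intro k hk
      have hk0 : k ≠ 0 := by have := (mem_Ico.1 hk).1; omega
      by_cases h : τ k = i <;> simp [seqB, hk0, h]
    rw [sum_congr rfl e1, sum_add_distrib, ← Finset.sum_filter, sum_const, cnt,
      Nat.cast_smul_eq_nsmul]
  rw [h1, h2, h3]
  abel

lemma Qmod_diff (hK : ∀ i, ‖f i x₀‖ ≤ K) (hK0 : 0 ≤ K) (hL0 : 0 ≤ L)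
    (hA : ∀ i (v : E), ‖fderiv ℝ (f i) x₀ v‖ ≤ L * ‖v‖) (τ' τ : ℕ → Fin M) :
    ‖Qmod f x₀ M τ' - Qmod f x₀ M τ‖
      ≤ 2*K*L*((M:ℝ)-1) * ∑ k ∈ range M, (if τ' k = τ k then (0:ℝ) else 1) := by
  set χ : ℕ → ℝ := fun k => if τ' k = τ k then (0:ℝ) else 1 with hχ
  have hGk : ∀ k, ‖Gmod f x₀ k τ' - Gmod f x₀ k τ‖ ≤ ∑ l ∈ range k, 2*K*χ l := by
    intro k
    rw [Gmod, Gmod, ← sum_sub_distrib]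
    refine (norm_sum_le _ _).trans (sum_le_sum fun l _ => ?_)
    by_cases h : τ' l = τ l
    · simp [hχ, h]
    · simp only [hχ, if_neg h, mul_one]
      exact (norm_sub_le _ _).trans (by linarith [hK (τ' l), hK (τ l)])
  have hGnorm : ∀ k (ρ : ℕ → Fin M), ‖Gmod f x₀ k ρ‖ ≤ k * K := by
    intro k ρ
    refine (norm_sum_le _ _).trans ?_
    calc ∑ l ∈ range k, ‖f (ρ l) x₀‖ ≤ ∑ l ∈ range k, K := sum_le_sum fun l _ => hK _
      _ = k * K := by rw [sum_const, card_range, nsmul_eq_mul]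
  have term : ∀ k, ‖fderiv ℝ (f (τ' k)) x₀ (Gmod f x₀ k τ')
        - fderiv ℝ (f (τ k)) x₀ (Gmod f x₀ k τ)‖
      ≤ 2*K*L*((∑ l ∈ range k, χ l) + k * χ k) := by
    intro k
    have split : fderiv ℝ (f (τ' k)) x₀ (Gmod f x₀ k τ') - fderiv ℝ (f (τ k)) x₀ (Gmod f x₀ k τ)
        = fderiv ℝ (f (τ' k)) x₀ (Gmod f x₀ k τ' - Gmod f x₀ k τ)
          + (fderiv ℝ (f (τ' k)) x₀ (Gmod f x₀ k τ) - fderiv ℝ (f (τ k)) x₀ (Gmod f x₀ k τ)) := by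
      rw [map_sub]; abel
    rw [split]
    have b1 : ‖fderiv ℝ (f (τ' k)) x₀ (Gmod f x₀ k τ' - Gmod f x₀ k τ)‖
        ≤ L * ∑ l ∈ range k, 2*K*χ l :=
      (hA _ _).trans (mul_le_mul_of_nonneg_left (hGk k) hL0)
    have b2 : ‖fderiv ℝ (f (τ' k)) x₀ (Gmod f x₀ k τ)
          - fderiv ℝ (f (τ k)) x₀ (Gmod f x₀ k τ)‖ ≤ 2*K*L*(k * χ k) := by
      by_cases h : τ' k = τ k
      · simp [hχ, h]
      · simp only [hχ, if_neg h, mul_one]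
        refine (norm_sub_le _ _).trans ?_
        have c1 := (hA (τ' k) (Gmod f x₀ k τ)).trans
          (mul_le_mul_of_nonneg_left (hGnorm k τ) hL0)
        have c2 := (hA (τ k) (Gmod f x₀ k τ)).trans
          (mul_le_mul_of_nonneg_left (hGnorm k τ) hL0)
        nlinarith
    calc ‖_ + _‖ ≤ _ := norm_add_le _ _
      _ ≤ L * ∑ l ∈ range k, 2*K*χ l + 2*K*L*(k * χ k) := add_le_add b1 b2
      _ = 2*K*L*((∑ l ∈ range k, χ l) + k * χ k) := by
          rw [show L * (∑ l ∈ range k, 2*K*χ l) = 2*K*L*∑ l ∈ range k, χ l from by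
            rw [mul_sum, mul_sum]; exact sum_congr rfl fun l _ => by ring]
          ring
  calc ‖Qmod f x₀ M τ' - Qmod f x₀ M τ‖
      = ‖∑ k ∈ range M, (fderiv ℝ (f (τ' k)) x₀ (Gmod f x₀ k τ')
          - fderiv ℝ (f (τ k)) x₀ (Gmod f x₀ k τ))‖ := by rw [Qmod, Qmod, ← sum_sub_distrib]
    _ ≤ ∑ k ∈ range M, 2*K*L*((∑ l ∈ range k, χ l) + k * χ k) :=
        (norm_sum_le _ _).trans (sum_le_sum fun k _ => term k)
    _ = 2*K*L*(((M:ℝ) - 1) * ∑ k ∈ range M, χ k) := by rw [← mul_sum, tri_sum]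
    _ = 2*K*L*((M:ℝ)-1) * ∑ k ∈ range M, (if τ' k = τ k then (0:ℝ) else 1) := by
        rw [hχ]; ring

lemma seqB_diff_count (hM : 0 < M) (i a : Fin M) (τ : ℕ → Fin M) :
    ∑ k ∈ range M, (if seqB i τ a k = τ k then (0:ℝ) else 1)
      ≤ (if τ 0 = i then 0 else 1) + (if a = i then 0 else (cnt i τ : ℝ)) := by
  rw [range_eq_Ico, Finset.sum_eq_sum_Ico_succ_bot hM]
  have h0 : (if seqB i τ a 0 = τ 0 then (0:ℝ) else 1) = (if τ 0 = i then 0 else 1) := by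
    simp only [seqB, if_pos rfl]
    by_cases h : τ 0 = i
    · simp [h]
    · rw [if_neg (fun hh => h hh.symm), if_neg h]
  have h1 : ∑ k ∈ Ico 1 M, (if seqB i τ a k = τ k then (0:ℝ) else 1)
      ≤ if a = i then 0 else (cnt i τ : ℝ) := by
    have e1 : ∀ k ∈ Ico 1 M, (if seqB i τ a k = τ k then (0:ℝ) else 1)
        ≤ (if τ k = i then (if a = i then (0:ℝ) else 1) else 0) := by
      intro k hk
      have hk0 : k ≠ 0 := by have := (mem_Ico.1 hk).1; omega
      by_cases h : τ k = i
      · by_cases h2 : a = i <;> simp [seqB, hk0, h, h2]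
      · simp [seqB, hk0, h]
    refine (sum_le_sum e1).trans ?_
    rw [← Finset.sum_filter, sum_const, nsmul_eq_mul, ← cnt]
    by_cases h2 : a = i <;> simp [h2]
  rw [h0]
  exact add_le_add le_rfl h1

lemma cast_card_filter_range (hM : 0 < M) (i : Fin M) (τ : ℕ → Fin M) :
    (#((range M).filter fun k => τ k = i) : ℝ)
      = (cnt i τ : ℝ) + (if τ 0 = i then 1 else 0) := by
  have : #((range M).filter fun k => τ k = i)
      = (if τ 0 = i then 1 else 0) + #((Ico 1 M).filter fun k => τ k = i) := by
    rw [card_filter, card_filter, range_eq_Ico, Finset.sum_eq_sum_Ico_succ_bot hM]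
  rw [cnt, this]
  push_cast
  ring

lemma aux_sum_pick {β : Type*} [AddCommMonoid β] {M : ℕ} (c i : Fin M) (v : Fin M → β) :
    (∑ a : Fin M, if c = a ∧ a ≠ i then v a else 0) = if c = i then 0 else v c := by
  by_cases h : c = i
  · rw [if_pos h]
    refine sum_eq_zero fun a _ => ?_
    rw [if_neg]
    rintro ⟨h1, h2⟩
    exact h2 (h1.symm.trans h)
  · rw [if_neg h, Finset.sum_eq_single_of_mem c (mem_univ _)]
    · rw [if_pos ⟨rfl, fun hh => h hh⟩]
    · intro b _ hb
      rw [if_neg]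
      rintro ⟨h1, _⟩
      exact hb h1.symm

lemma model_bound (hM : 0 < M) (hK : ∀ j, ‖f j x₀‖ ≤ K) (hK0 : 0 ≤ K) (hL0 : 0 ≤ L)
    {ι : Type*} (t : Finset ι) (w : ι → ℝ) (σ : ι → ℕ → Fin M)
    (hw0 : ∀ j ∈ t, 0 ≤ w j) (hw1 : ∑ j ∈ t, w j = 1) (i : Fin M)
    (hwi : 1 ≤ ∑ j ∈ t, w j * (#((range M).filter fun k => σ j k = i) : ℝ)) :
    ∃ q : Fin M → ℝ, (∀ a, 0 ≤ q a) ∧ (∑ a, q a = 1) ∧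
      (∑ j ∈ t, ∑ a : Fin M, (w j * q a) • Gmod f x₀ M (seqB i (σ j) a)
          = ∑ j ∈ t, w j • Gmod f x₀ M (σ j)) ∧
      (∑ j ∈ t, ∑ a : Fin M, (w j * q a) *
          ((if σ j 0 = i then (0:ℝ) else 1) + (if a = i then 0 else (cnt i (σ j) : ℝ)))
        ≤ 2) := by
  classical
  set g : Fin M → E := fun a => f a x₀ with hg
  set m : ℝ := ∑ j ∈ t, (if σ j 0 = i then 0 else w j) with hm
  set w' : ℝ := ∑ j ∈ t, w j * (cnt i (σ j) : ℝ) with hw'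
  have hm0 : 0 ≤ m := sum_nonneg fun j hj => by
    by_cases h : σ j 0 = i <;> simp [h, hw0 j hj]
  have hm1 : m ≤ 1 := by
    rw [hm, ← hw1]
    exact sum_le_sum fun j hj => by by_cases h : σ j 0 = i <;> simp [h, hw0 j hj]
  have hw'0 : 0 ≤ w' := sum_nonneg fun j hj => mul_nonneg (hw0 j hj) (Nat.cast_nonneg _)
  have h1m : ∑ j ∈ t, (if σ j 0 = i then w j else 0) = 1 - m := by
    rw [hm, ← hw1, ← sum_sub_distrib]
    exact sum_congr rfl fun j hj => by by_cases h : σ j 0 = i <;> simp [h]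
  have hmw' : m ≤ w' := by
    have key : ∑ j ∈ t, w j * (#((range M).filter fun k => σ j k = i) : ℝ)
        = w' + (1 - m) := by
      rw [hw', ← h1m, ← sum_add_distrib]
      refine sum_congr rfl fun j hj => ?_
      rw [cast_card_filter_range hM]
      by_cases h : σ j 0 = i <;> simp [h] <;> ring
    rw [key] at hwi
    linarith
  set p : ℝ := if w' = 0 then 0 else m / w' with hp
  have hp0 : 0 ≤ p := by
    rw [hp]; split
    · exact le_rfl
    · exact div_nonneg hm0 hw'0
  have hp1 : p ≤ 1 := by
    rw [hp]; split
    · norm_num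
    · rename_i h
      exact (div_le_one (lt_of_le_of_ne hw'0 (Ne.symm h))).2 hmw'
  have hpw' : p * w' = m := by
    rw [hp]; split
    · rename_i h
      rw [h] at hmw'
      linarith
    · rename_i h
      exact div_mul_cancel₀ m h
  have hpm : m = 0 → p = 0 := by
    intro h0
    rw [hp]; split
    · rfl
    · rw [h0]; exact zero_div _
  set ν : Fin M → ℝ := fun a => ∑ j ∈ t, (if σ j 0 = a ∧ a ≠ i then w j else 0) with hν
  have hν0 : ∀ a, 0 ≤ ν a := fun a => sum_nonneg fun j hj => by
    split
    · exact hw0 j hj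
    · exact le_rfl
  have hνi : ν i = 0 := sum_eq_zero fun j hj => by simp
  have hνsum : ∑ a, ν a = m := by
    rw [hν, hm, sum_comm]
    exact sum_congr rfl fun j _ => aux_sum_pick (σ j 0) i fun _ => w j
  set W : E := ∑ a : Fin M, ν a • g a with hWdef
  have hW : W = ∑ j ∈ t, (if σ j 0 = i then (0:E) else w j • g (σ j 0)) := by
    rw [hWdef, hν]
    have e1 : ∀ a : Fin M, (∑ j ∈ t, (if σ j 0 = a ∧ a ≠ i then w j else 0)) • g a
        = ∑ j ∈ t, (if σ j 0 = a ∧ a ≠ i then w j • g a else 0) := by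
      intro a
      rw [sum_smul]
      exact sum_congr rfl fun j _ => by split <;> simp
    rw [sum_congr rfl fun a _ => e1 a, sum_comm]
    exact sum_congr rfl fun j _ => aux_sum_pick (σ j 0) i fun a => w j • g a
  set q : Fin M → ℝ := fun a => (if a = i then 1 - p else 0) + p * (ν a / m) with hq
  have hq0 : ∀ a, 0 ≤ q a := fun a => by
    refine add_nonneg ?_ (mul_nonneg hp0 (div_nonneg (hν0 a) hm0))
    split
    · linarith
    · exact le_rfl
  have hqsum : ∑ a, q a = 1 := by
    rw [hq, sum_add_distrib]
    have e1 : ∑ a : Fin M, (if a = i then 1 - p else 0) = 1 - p :=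
      by rw [Finset.sum_ite_eq' univ i fun _ => 1 - p, if_pos (mem_univ i)]
    have e2 : ∑ a : Fin M, p * (ν a / m) = p * (m / m) := by
      rw [← Finset.mul_sum, ← sum_div, hνsum]
    rw [e1, e2]
    rcases eq_or_ne m 0 with h0 | h0
    · rw [hpm h0]; ring
    · rw [div_self h0]; ring
  have hqsum' : ∑ a : Fin M, q a * (if a = i then 0 else 1) = p := by
    have e1 : ∀ a : Fin M, q a * (if a = i then 0 else 1) = p * (ν a / m) := by
      intro a
      rcases eq_or_ne a i with h | h
      · rw [h, hνi]
        simp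
      · simp [hq, h]
    rw [sum_congr rfl fun a _ => e1 a, ← Finset.mul_sum, ← sum_div, hνsum]
    rcases eq_or_ne m 0 with h0 | h0
    · rw [hpm h0]; ring
    · rw [div_self h0]; ring
  refine ⟨q, hq0, hqsum, ?_, ?_⟩
  · -- G-balance
    set V : E := ∑ a : Fin M, q a • (g a - g i) with hV
    have hw'V : w' • V = W - m • g i := by
      rcases eq_or_ne m 0 with h0 | h0
      · have hp0' : p = 0 := hpm h0
        have hsum0 : ∑ j ∈ t, (if σ j 0 = i then (0:ℝ) else w j) = 0 := by rw [← hm]; exact h0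
        have hwj0 : ∀ j ∈ t, (if σ j 0 = i then (0:ℝ) else w j) = 0 :=
          (Finset.sum_eq_zero_iff_of_nonneg fun j hj => by
            by_cases h : σ j 0 = i <;> simp [h, hw0 j hj]).1 hsum0
        have hV0 : V = 0 := by
          rw [hV]
          refine sum_eq_zero fun a _ => ?_
          rcases eq_or_ne a i with h | h
          · rw [h]; simp
          · simp [hq, h, hp0', hνi]
        have hW0 : W = 0 := by
          rw [hW]
          refine sum_eq_zero fun j hj => ?_
          by_cases h : σ j 0 = i
          · rw [if_pos h]
          · have : w j = 0 := by simpa [h] using hwj0 j hj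
            rw [if_neg h, this, zero_smul]
        rw [hV0, hW0, h0, smul_zero, zero_smul, sub_zero]
      · have hV1 : V = ∑ a : Fin M, (p * (ν a / m)) • (g a - g i) := by
          rw [hV]
          have e : ∀ a : Fin M, q a • (g a - g i)
              = (if a = i then (1-p) • (g a - g i) else 0) + (p * (ν a / m)) • (g a - g i) := by
            intro a
            rw [hq]
            rcases eq_or_ne a i with h | h <;> simp [h, add_smul]
          rw [sum_congr rfl fun a _ => e a, sum_add_distrib,
            Finset.sum_ite_eq' univ i fun a => (1-p) • (g a - g i), if_pos (mem_univ i)]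
          simp
        have hscal : ∀ a : Fin M, w' * (p * (ν a / m)) = ν a := by
          intro a
          rw [show w' * (p * (ν a / m)) = (p * w') * (ν a) / m by ring, hpw']
          exact mul_div_cancel_left₀ _ h0
        calc w' • V = ∑ a : Fin M, (w' * (p * (ν a / m))) • (g a - g i) := by
              rw [hV1, Finset.smul_sum]
              exact sum_congr rfl fun a _ => (smul_smul _ _ _)
          _ = ∑ a : Fin M, ν a • (g a - g i) := sum_congr rfl fun a _ => by rw [hscal a]
          _ = W - m • g i := by
              rw [hWdef, ← hνsum, sum_smul, ← sum_sub_distrib]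
              exact sum_congr rfl fun a _ => by rw [smul_sub]
    have expand : ∀ j ∈ t, ∑ a : Fin M, (w j * q a) • Gmod f x₀ M (seqB i (σ j) a)
        = w j • Gmod f x₀ M (σ j)
          + (w j • (g i - g (σ j 0)) + (w j * (cnt i (σ j) : ℝ)) • V) := by
      intro j _
      have e : ∀ a : Fin M, (w j * q a) • Gmod f x₀ M (seqB i (σ j) a)
          = (w j * q a) • Gmod f x₀ M (σ j) + ((w j * q a) • (g i - g (σ j 0))
            + (w j * (cnt i (σ j) : ℝ)) • (q a • (g a - g i))) := by
        intro a
        rw [Gmod_seqB hM i a (σ j), smul_smul]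
        have : f i x₀ = g i := rfl
        module
      rw [sum_congr rfl fun a _ => e a, sum_add_distrib, sum_add_distrib, ← Finset.smul_sum,
        ← sum_smul, ← sum_smul, ← Finset.mul_sum, hqsum, mul_one, ← hV]
    rw [sum_congr rfl expand, sum_add_distrib, sum_add_distrib, ← sum_smul, ← hw', hw'V]
    have hmgi : m • g i = ∑ j ∈ t, (if σ j 0 = i then (0:E) else w j • g i) := by
      rw [hm, sum_smul]
      exact sum_congr rfl fun j _ => by split <;> simp
    have final : ∑ j ∈ t, w j • (g i - g (σ j 0)) + (W - m • g i) = 0 := by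
      rw [hW, hmgi, ← sum_sub_distrib, ← sum_add_distrib]
      refine sum_eq_zero fun j _ => ?_
      by_cases h : σ j 0 = i
      · rw [if_pos h, if_pos h, h]
        simp
      · rw [if_neg h, if_neg h, smul_sub]
        abel
    rw [final, add_zero]
  · -- scalar bound
    have inner : ∀ j ∈ t, ∑ a : Fin M, (w j * q a) *
          ((if σ j 0 = i then (0:ℝ) else 1) + (if a = i then 0 else (cnt i (σ j) : ℝ)))
        = w j * (if σ j 0 = i then (0:ℝ) else 1) + (w j * (cnt i (σ j) : ℝ)) * p := by
      intro j _
      have e : ∀ a : Fin M, (w j * q a) *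
            ((if σ j 0 = i then (0:ℝ) else 1) + (if a = i then 0 else (cnt i (σ j) : ℝ)))
          = (w j * (if σ j 0 = i then (0:ℝ) else 1)) * q a
            + (w j * (cnt i (σ j) : ℝ)) * (q a * (if a = i then 0 else 1)) := by
        intro a
        rw [show (if a = i then (0:ℝ) else (cnt i (σ j) : ℝ))
            = (cnt i (σ j) : ℝ) * (if a = i then 0 else 1) from by split <;> ring]
        ring
      rw [sum_congr rfl fun a _ => e a, sum_add_distrib, ← Finset.mul_sum, ← Finset.mul_sum,
        hqsum, hqsum', mul_one]
    rw [sum_congr rfl inner, sum_add_distrib, ← sum_mul, ← hw']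
    have e2 : ∑ j ∈ t, w j * (if σ j 0 = i then (0:ℝ) else 1) = m := by
      rw [hm]
      exact sum_congr rfl fun j _ => by split <;> simp
    rw [e2, mul_comm w' p, hpw']
    linarith

lemma sum_range_cast (n : ℕ) : ∑ k ∈ range n, (k:ℝ) = n*(n-1)/2 := by
  induction n with
  | zero => simp
  | succ n ih => rw [sum_range_succ, ih]; push_cast; ring
lemma sum_sum_range (n : ℕ) : ∑ t ∈ range n, ∑ s ∈ range t, (s:ℝ) = n*(n-1)*(n-2)/6 := by
  induction n with
  | zero => simp
  | succ n ih => rw [sum_range_succ, ih, sum_range_cast]; push_cast; ring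
lemma sum_range_sq (n : ℕ) : ∑ k ∈ range n, (k:ℝ)^2 = n*(n-1)*(2*n-1)/6 := by
  induction n with
  | zero => simp
  | succ n ih => rw [sum_range_succ, ih]; push_cast; ring

end CHCE

open CHCE

theorem convexHull_commutation_estimate (d M : ℕ) (hM : d + 1 ≤ M) (K L S Δt : ℝ)
    (hΔt : 0 < Δt)
    (f : Fin M → EuclideanSpace ℝ (Fin d) → EuclideanSpace ℝ (Fin d))
    (hdiff : ∀ i, Differentiable ℝ (f i))
    (hK : ∀ i x, ‖f i x‖ ≤ K)
    (hL : ∀ i x, ‖fderiv ℝ (f i) x‖ ≤ L)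
    (hS : ∀ i x z, ‖f i x - f i z - fderiv ℝ (f i) z (x - z)‖ ≤ S * ‖x - z‖ ^ 2)
    (x₀ : EuclideanSpace ℝ (Fin d)) :
    convexHull ℝ (iterMap (fun x => ⋃ i, {x + Δt • f i x}) M x₀) ⊆
      (⋃ i : Fin M, convexHull ℝ
          (iterMap (fun x => ⋃ j, {x + Δt • f j x}) (M - 1) (x₀ + Δt • f i x₀))) +
        ((8 * (M : ℝ) - 10) * K * L * Δt ^ 2 +
          (2 * K * L ^ 2 * (((M : ℝ) - 1) ^ 3 - ((M : ℝ) - 1)) / 3 * (1 + L * Δt) ^ (M - 3) +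
            S * K ^ 2 * ((M : ℝ) * ((M : ℝ) - 1) * (2 * (M : ℝ) - 1)) / 3) * Δt ^ 3) •
          Metric.closedBall (0 : EuclideanSpace ℝ (Fin d)) 1 := by
  classical
  have hM1 : 0 < M := by omega
  haveI : Nonempty (Fin M) := Fin.pos_iff_nonempty.1 hM1
  set R : ℝ := (8 * (M : ℝ) - 10) * K * L * Δt ^ 2 +
      (2 * K * L ^ 2 * (((M : ℝ) - 1) ^ 3 - ((M : ℝ) - 1)) / 3 * (1 + L * Δt) ^ (M - 3) +
        S * K ^ 2 * ((M : ℝ) * ((M : ℝ) - 1) * (2 * (M : ℝ) - 1)) / 3) * Δt ^ 3 with hR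
  set i0 : Fin M := ⟨0, hM1⟩
  rcases Nat.eq_zero_or_pos d with hd | hd
  · -- degenerate case : the space is a subsingleton
    subst hd
    haveI : Subsingleton (EuclideanSpace ℝ (Fin 0)) := ⟨fun a b => PiLp.ext fun i => i.elim0⟩
    intro x _
    have hA : traj Δt f (x₀ + Δt • f i0 x₀) (fun _ => i0) (M-1)
        ∈ ⋃ i : Fin M, convexHull ℝ
          (iterMap (fun x => ⋃ j, {x + Δt • f j x}) (M - 1) (x₀ + Δt • f i x₀)) :=
      Set.mem_iUnion.2 ⟨i0, subset_convexHull ℝ _ (traj_mem_iterMap Δt f _ _ _)⟩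
    have hB : (0 : EuclideanSpace ℝ (Fin 0)) ∈ R • Metric.closedBall (0 : EuclideanSpace ℝ (Fin 0)) 1 := ⟨0, by simp, smul_zero R⟩
    have hxeq : x = traj Δt f (x₀ + Δt • f i0 x₀) (fun _ => i0) (M-1) + 0 :=
      Subsingleton.elim _ _
    rw [hxeq]
    exact Set.add_mem_add hA hB
  · -- main case
    have hM2 : 2 ≤ M := by omega
    have hK0 : 0 ≤ K := (norm_nonneg _).trans (hK i0 x₀)
    have hL0 : 0 ≤ L := (norm_nonneg _).trans (hL i0 x₀)
    have hS0 : 0 ≤ S := by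
      set v := EuclideanSpace.single (⟨0, hd⟩ : Fin d) (1:ℝ) with hv
      have hvn : ‖v‖ = 1 := by rw [hv, EuclideanSpace.norm_single]; norm_num
      have h := hS i0 v 0
      rw [sub_zero, hvn] at h
      have h2 : (0:ℝ) ≤ S * 1 ^ 2 := (norm_nonneg _).trans h
      linarith
    have hLip : ∀ i x y, ‖f i x - f i y‖ ≤ L * ‖x - y‖ := fun i x y =>
      Convex.norm_image_sub_le_of_norm_fderiv_le (fun z _ => (hdiff i).differentiableAt)
        (fun z _ => hL i z) convex_univ (Set.mem_univ _) (Set.mem_univ _)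
    have hA : ∀ i v, ‖fderiv ℝ (f i) x₀ v‖ ≤ L * ‖v‖ := fun i v =>
      ((fderiv ℝ (f i) x₀).le_opNorm v).trans
        (mul_le_mul_of_nonneg_right (hL i x₀) (norm_nonneg v))
    have hSx : ∀ i x, ‖f i x - f i x₀ - fderiv ℝ (f i) x₀ (x - x₀)‖ ≤ S * ‖x - x₀‖ ^ 2 :=
      fun i x => hS i x x₀
    intro x hx
    rw [_root_.convexHull_eq] at hx
    obtain ⟨ι, t, w, z, hw0, hw1, hz, hcm⟩ := hx
    have hz' : ∀ j : ι, ∃ σ : ℕ → Fin M, j ∈ t → z j = traj Δt f x₀ σ M := by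
      intro j
      by_cases hj : j ∈ t
      · obtain ⟨σ, hσ⟩ := (mem_iterMap_iff (Δt := Δt) (f := f)).1 (hz j hj)
        exact ⟨σ, fun _ => hσ⟩
      · exact ⟨fun _ => i0, fun h => absurd h hj⟩
    choose σ hσ using hz'
    -- pigeonhole : some letter i has weighted count at least 1
    have hccnt_sum : ∀ τ : ℕ → Fin M,
        ∑ i : Fin M, (#((range M).filter fun k => τ k = i) : ℝ) = M := by
      intro τ
      rw [← Nat.cast_sum]
      norm_cast
      rw [← Finset.card_eq_sum_card_fiberwise (fun k _ => mem_univ (τ k)), card_range]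
    have pigeon : ∃ i : Fin M,
        1 ≤ ∑ j ∈ t, w j * (#((range M).filter fun k => σ j k = i) : ℝ) := by
      have htot : ∑ i : Fin M, ∑ j ∈ t, w j * (#((range M).filter fun k => σ j k = i) : ℝ)
          = M := by
        rw [sum_comm]
        have e1 : ∀ j ∈ t, ∑ i : Fin M, w j * (#((range M).filter fun k => σ j k = i) : ℝ)
            = w j * M := fun j _ => by rw [← Finset.mul_sum, hccnt_sum]
        rw [sum_congr rfl e1, ← sum_mul, hw1, one_mul]
      by_contra hno
      push_neg at hno
      have hlt := Finset.sum_lt_sum_of_nonempty univ_nonempty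
        (f := fun i : Fin M => ∑ j ∈ t, w j * (#((range M).filter fun k => σ j k = i) : ℝ))
        (g := fun _ => (1:ℝ)) (fun i _ => hno i)
      rw [htot, sum_const, card_univ, Fintype.card_fin, nsmul_eq_mul, mul_one] at hlt
      exact absurd hlt (lt_irrefl _)
    obtain ⟨i, hwi⟩ := pigeon
    obtain ⟨q, hq0, hqsum, hGbal, hQsum⟩ :=
      model_bound hM1 (fun j => hK j x₀) hK0 hL0 t w σ hw0 hw1 i hwi
    -- the target convex combination
    set T := fun τ : ℕ → Fin M => traj Δt f x₀ τ M with hT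
    set Pm := fun τ : ℕ → Fin M =>
      x₀ + Δt • Gmod f x₀ M τ + Δt ^ 2 • Qmod f x₀ M τ with hPm
    set y := ∑ j ∈ t, ∑ a : Fin M, (w j * q a) • T (seqB i (σ j) a) with hy
    have hdouble1 : ∀ j ∈ t, ∑ a : Fin M, w j * q a = w j := fun j _ => by
      rw [← Finset.mul_sum, hqsum, mul_one]
    -- membership of y
    have hymem : y ∈ ⋃ i : Fin M, convexHull ℝ
        (iterMap (fun x => ⋃ j, {x + Δt • f j x}) (M - 1) (x₀ + Δt • f i x₀)) := by
      have hsum : ∑ p ∈ t ×ˢ (univ : Finset (Fin M)), w p.1 * q p.2 = 1 := by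
        rw [Finset.sum_product, sum_congr rfl hdouble1, hw1]
      have hmemb : ∀ p ∈ t ×ˢ (univ : Finset (Fin M)),
          T (seqB i (σ p.1) p.2)
            ∈ iterMap (fun x => ⋃ j, {x + Δt • f j x}) (M - 1) (x₀ + Δt • f i x₀) := by
        rintro ⟨j, a⟩ _
        have hM' : M - 1 + 1 = M := Nat.succ_pred_eq_of_pos hM1
        have h0 : seqB i (σ j) a 0 = i := rfl
        have hshift := traj_shift Δt f x₀ (seqB i (σ j) a) (M-1)
        rw [hM'] at hshift
        show traj Δt f x₀ (seqB i (σ j) a) M ∈ _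
        rw [hshift, h0]
        exact traj_mem_iterMap _ _ _ _ _
      have hmm := Finset.centerMass_mem_convexHull (t ×ˢ (univ : Finset (Fin M)))
        (w := fun p => w p.1 * q p.2)
        (fun p hp => mul_nonneg (hw0 _ (mem_product.1 hp).1) (hq0 _))
        (by rw [hsum]; exact one_pos) hmemb
      rw [Finset.centerMass_eq_of_sum_1 _ _ hsum, Finset.sum_product] at hmm
      exact Set.mem_iUnion.2 ⟨i, hmm⟩
    -- x as a combination
    have hx_eq : x = ∑ j ∈ t, w j • T (σ j) := by
      rw [← hcm, Finset.centerMass_eq_of_sum_1 _ _ hw1]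
      exact sum_congr rfl fun j hj => by rw [hσ j hj]
    -- cubic per-trajectory bound
    set C : ℝ := ∑ t ∈ range M,
        (K * L ^ 2 * Δt ^ 3 * (∑ s ∈ range t, (s:ℝ)) + S * K ^ 2 * Δt ^ 3 * (t:ℝ) ^ 2) with hC
    have hPj : ∀ τ : ℕ → Fin M, ‖T τ - Pm τ‖ ≤ C := fun τ =>
      traj_quad hΔt.le hK hK0 hL0 hS0 hLip hA hSx τ M
    have hM1R : (1:ℝ) ≤ (M:ℝ) := by exact_mod_cast hM1
    have hMR : (2:ℝ) ≤ (M:ℝ) := by exact_mod_cast hM2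
    have hKL0 : 0 ≤ 2 * K * L * ((M:ℝ) - 1) := by
      have h1 : (0:ℝ) ≤ 2 * K * L := by positivity
      have h2 : (0:ℝ) ≤ (M:ℝ) - 1 := by linarith
      exact mul_nonneg h1 h2
    -- bound on the Q-part of the model difference
    have hQdiff : ‖∑ j ∈ t, ∑ a : Fin M, (w j * q a) •
          (Qmod f x₀ M (σ j) - Qmod f x₀ M (seqB i (σ j) a))‖
        ≤ 2 * K * L * ((M:ℝ) - 1) * 2 := by
      have hterm : ∀ j ∈ t, ∀ a : Fin M,
          ‖(w j * q a) • (Qmod f x₀ M (σ j) - Qmod f x₀ M (seqB i (σ j) a))‖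
            ≤ (w j * q a) * (2 * K * L * ((M:ℝ) - 1) *
              ((if σ j 0 = i then (0:ℝ) else 1) + (if a = i then 0 else (cnt i (σ j) : ℝ)))) := by
        intro j hj a
        have hwq : 0 ≤ w j * q a := mul_nonneg (hw0 j hj) (hq0 a)
        rw [norm_smul, Real.norm_eq_abs, abs_of_nonneg hwq]
        refine mul_le_mul_of_nonneg_left ?_ hwq
        rw [norm_sub_rev]
        refine (Qmod_diff (fun j => hK j x₀) hK0 hL0 hA (seqB i (σ j) a) (σ j)).trans ?_
        exact mul_le_mul_of_nonneg_left (seqB_diff_count hM1 i a (σ j)) hKL0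
      calc ‖∑ j ∈ t, ∑ a : Fin M, (w j * q a) •
            (Qmod f x₀ M (σ j) - Qmod f x₀ M (seqB i (σ j) a))‖
          ≤ ∑ j ∈ t, ∑ a : Fin M, ‖(w j * q a) •
            (Qmod f x₀ M (σ j) - Qmod f x₀ M (seqB i (σ j) a))‖ :=
            (norm_sum_le _ _).trans (sum_le_sum fun j _ => norm_sum_le _ _)
        _ ≤ ∑ j ∈ t, ∑ a : Fin M, (w j * q a) * (2 * K * L * ((M:ℝ) - 1) *
              ((if σ j 0 = i then (0:ℝ) else 1) + (if a = i then 0 else (cnt i (σ j) : ℝ)))) :=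
            sum_le_sum fun j hj => sum_le_sum fun a _ => hterm j hj a
        _ = 2 * K * L * ((M:ℝ) - 1) * ∑ j ∈ t, ∑ a : Fin M, (w j * q a) *
              ((if σ j 0 = i then (0:ℝ) else 1) + (if a = i then 0 else (cnt i (σ j) : ℝ))) := by
            rw [Finset.mul_sum]
            refine sum_congr rfl fun j _ => ?_
            rw [Finset.mul_sum]
            exact sum_congr rfl fun a _ => by ring
        _ ≤ 2 * K * L * ((M:ℝ) - 1) * 2 := mul_le_mul_of_nonneg_left hQsum hKL0
    -- splitting the difference x - y
    have e_x0 : ∑ j ∈ t, w j • x₀ = x₀ := by rw [← sum_smul, hw1, one_smul]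
    have split1 : ∑ j ∈ t, w j • T (σ j)
        = (∑ j ∈ t, w j • (T (σ j) - Pm (σ j)))
          + (x₀ + Δt • (∑ j ∈ t, w j • Gmod f x₀ M (σ j))
            + Δt ^ 2 • (∑ j ∈ t, w j • Qmod f x₀ M (σ j))) := by
      have e : ∀ j ∈ t, w j • T (σ j) = w j • (T (σ j) - Pm (σ j))
          + (w j • x₀ + Δt • (w j • Gmod f x₀ M (σ j))
            + Δt ^ 2 • (w j • Qmod f x₀ M (σ j))) := by
        intro j _
        simp only [hPm]
        module
      rw [sum_congr rfl e, sum_add_distrib, sum_add_distrib, sum_add_distrib, e_x0,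
        ← Finset.smul_sum, ← Finset.smul_sum]
    have split2 : ∑ j ∈ t, ∑ a : Fin M, (w j * q a) • T (seqB i (σ j) a)
        = (∑ j ∈ t, ∑ a : Fin M, (w j * q a) • (T (seqB i (σ j) a) - Pm (seqB i (σ j) a)))
          + (x₀ + Δt • (∑ j ∈ t, ∑ a : Fin M, (w j * q a) • Gmod f x₀ M (seqB i (σ j) a))
            + Δt ^ 2 • (∑ j ∈ t, ∑ a : Fin M, (w j * q a) • Qmod f x₀ M (seqB i (σ j) a))) := by
      have einner : ∀ j ∈ t, ∑ a : Fin M, (w j * q a) • T (seqB i (σ j) a)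
          = (∑ a : Fin M, (w j * q a) • (T (seqB i (σ j) a) - Pm (seqB i (σ j) a)))
            + (w j • x₀ + Δt • (∑ a : Fin M, (w j * q a) • Gmod f x₀ M (seqB i (σ j) a))
              + Δt ^ 2 • (∑ a : Fin M, (w j * q a) • Qmod f x₀ M (seqB i (σ j) a))) := by
        intro j hj
        have e : ∀ a : Fin M, (w j * q a) • T (seqB i (σ j) a)
            = (w j * q a) • (T (seqB i (σ j) a) - Pm (seqB i (σ j) a))
              + ((w j * q a) • x₀ + Δt • ((w j * q a) • Gmod f x₀ M (seqB i (σ j) a))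
                + Δt ^ 2 • ((w j * q a) • Qmod f x₀ M (seqB i (σ j) a))) := by
          intro a
          simp only [hPm]
          module
        rw [sum_congr rfl fun a _ => e a, sum_add_distrib, sum_add_distrib, sum_add_distrib,
          ← sum_smul, hdouble1 j hj, ← Finset.smul_sum, ← Finset.smul_sum]
      rw [sum_congr rfl einner, sum_add_distrib, sum_add_distrib, sum_add_distrib, e_x0,
        ← Finset.smul_sum, ← Finset.smul_sum]
    have eQ : ∑ j ∈ t, ∑ a : Fin M, (w j * q a) •
          (Qmod f x₀ M (σ j) - Qmod f x₀ M (seqB i (σ j) a))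
        = (∑ j ∈ t, w j • Qmod f x₀ M (σ j))
          - ∑ j ∈ t, ∑ a : Fin M, (w j * q a) • Qmod f x₀ M (seqB i (σ j) a) := by
      rw [← sum_sub_distrib]
      refine sum_congr rfl fun j hj => ?_
      have e : ∀ a : Fin M, (w j * q a) • (Qmod f x₀ M (σ j) - Qmod f x₀ M (seqB i (σ j) a))
          = (w j * q a) • Qmod f x₀ M (σ j) - (w j * q a) • Qmod f x₀ M (seqB i (σ j) a) :=
        fun a => smul_sub _ _ _
      rw [sum_congr rfl fun a _ => e a, sum_sub_distrib, ← sum_smul, hdouble1 j hj]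
    have key : x - y = (∑ j ∈ t, w j • (T (σ j) - Pm (σ j)))
        - (∑ j ∈ t, ∑ a : Fin M, (w j * q a) • (T (seqB i (σ j) a) - Pm (seqB i (σ j) a)))
        + Δt ^ 2 • (∑ j ∈ t, ∑ a : Fin M, (w j * q a) •
            (Qmod f x₀ M (σ j) - Qmod f x₀ M (seqB i (σ j) a))) := by
      rw [hx_eq, hy, split1, split2, hGbal, eQ]
      module
    -- norm bounds for the cubic parts
    have h1 : ‖∑ j ∈ t, w j • (T (σ j) - Pm (σ j))‖ ≤ C := by
      refine (norm_sum_le _ _).trans ?_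
      have e : ∀ j ∈ t, ‖w j • (T (σ j) - Pm (σ j))‖ ≤ w j * C := fun j hj => by
        rw [norm_smul, Real.norm_eq_abs, abs_of_nonneg (hw0 j hj)]
        exact mul_le_mul_of_nonneg_left (hPj _) (hw0 j hj)
      exact (sum_le_sum e).trans (by rw [← sum_mul, hw1, one_mul])
    have h3 : ‖∑ j ∈ t, ∑ a : Fin M, (w j * q a) •
          (T (seqB i (σ j) a) - Pm (seqB i (σ j) a))‖ ≤ C := by
      refine (norm_sum_le _ _).trans ?_
      have e : ∀ j ∈ t, ‖∑ a : Fin M, (w j * q a) •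
            (T (seqB i (σ j) a) - Pm (seqB i (σ j) a))‖ ≤ w j * C := by
        intro j hj
        refine (norm_sum_le _ _).trans ?_
        have e2 : ∀ a : Fin M, ‖(w j * q a) • (T (seqB i (σ j) a) - Pm (seqB i (σ j) a))‖
            ≤ (w j * q a) * C := fun a => by
          have hwq : 0 ≤ w j * q a := mul_nonneg (hw0 j hj) (hq0 a)
          rw [norm_smul, Real.norm_eq_abs, abs_of_nonneg hwq]
          exact mul_le_mul_of_nonneg_left (hPj _) hwq
        refine (sum_le_sum fun a _ => e2 a).trans ?_
        rw [← sum_mul, hdouble1 j hj]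
      exact (sum_le_sum e).trans (by rw [← sum_mul, hw1, one_mul])
    have hxy : ‖x - y‖ ≤ C + C + Δt ^ 2 * (2 * K * L * ((M:ℝ) - 1) * 2) := by
      rw [key]
      refine (norm_add_le _ _).trans ?_
      have hab : ‖(∑ j ∈ t, w j • (T (σ j) - Pm (σ j)))
          - ∑ j ∈ t, ∑ a : Fin M, (w j * q a) •
            (T (seqB i (σ j) a) - Pm (seqB i (σ j) a))‖ ≤ C + C :=
        (norm_sub_le _ _).trans (add_le_add h1 h3)
      have hsm : ‖Δt ^ 2 • (∑ j ∈ t, ∑ a : Fin M, (w j * q a) •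
            (Qmod f x₀ M (σ j) - Qmod f x₀ M (seqB i (σ j) a)))‖
          ≤ Δt ^ 2 * (2 * K * L * ((M:ℝ) - 1) * 2) := by
        rw [norm_smul, Real.norm_eq_abs, abs_of_nonneg (sq_nonneg Δt)]
        exact mul_le_mul_of_nonneg_left hQdiff (sq_nonneg Δt)
      exact add_le_add hab hsm
    -- closed form for C and the final numeric comparison
    have hCval : C = K * L ^ 2 * Δt ^ 3 * ((M:ℝ) * ((M:ℝ) - 1) * ((M:ℝ) - 2) / 6)
        + S * K ^ 2 * Δt ^ 3 * ((M:ℝ) * ((M:ℝ) - 1) * (2 * (M:ℝ) - 1) / 6) := by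
      rw [hC, sum_add_distrib, ← Finset.mul_sum, ← Finset.mul_sum, sum_sum_range, sum_range_sq]
    have hpow : (1:ℝ) ≤ (1 + L * Δt) ^ (M - 3) := by
      have h0 : (0:ℝ) ≤ L * Δt := mul_nonneg hL0 hΔt.le
      have h1 : (1:ℝ) ≤ 1 + L * Δt := by linarith
      exact one_le_pow₀ h1
    have hDR : C + C + Δt ^ 2 * (2 * K * L * ((M:ℝ) - 1) * 2) ≤ R := by
      rw [hCval, hR]
      have fA : (0:ℝ) ≤ K * L * Δt ^ 2 := by positivity
      have fB : (0:ℝ) ≤ K * L ^ 2 * Δt ^ 3 * ((M:ℝ) * ((M:ℝ) - 1) * ((M:ℝ) - 2)) := by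
        have h2 : (0:ℝ) ≤ (M:ℝ) * ((M:ℝ) - 1) * ((M:ℝ) - 2) :=
          mul_nonneg (mul_nonneg (by linarith) (by linarith)) (by linarith)
        have h3 : (0:ℝ) ≤ K * L ^ 2 * Δt ^ 3 := by positivity
        exact mul_nonneg h3 h2
      have hprod1 : (0:ℝ) ≤ (K * L * Δt ^ 2) * (4 * (M:ℝ) - 6) :=
        mul_nonneg fA (by linarith)
      have hprod2 : (0:ℝ) ≤ (K * L ^ 2 * Δt ^ 3 * ((M:ℝ) * ((M:ℝ) - 1) * ((M:ℝ) - 2)))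
          * ((1 + L * Δt) ^ (M - 3) - 1) := mul_nonneg fB (by linarith)
      linarith [hprod1, hprod2, fB]
    have hxR : ‖x - y‖ ≤ R := hxy.trans hDR
    have hR0 : 0 ≤ R := (norm_nonneg _).trans hxR
    have hfin : x = y + (x - y) := by abel
    rw [hfin]
    exact Set.add_mem_add hymem (mem_smul_closedBall_of_norm_le hR0 hxR)
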